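/- arXiv:math/0407028 — 2 statements merged into one kernel-verified Lean document; each statement's English description precedes it below -/
import Mathlib

section
/- Define for v ∈ ℝ³ with v̂ = v/√(1+|v|²) and unit vector ω the kernel a^{tt}(ω,v̂) = (3|v̂|⁴ - (ω·v̂)²|v̂|² - |v̂|² + 3(ω·v̂)² + 4(ω·v̂)|v̂|²)/(1+ω·v̂)⁴. Then ∫_{|ω|=1} a^{tt}(ω,v̂) dω = 0 for every v ∈ ℝ³. -/
open MeasureTheory Real
open scoped RealInnerProductSpace

/-- The relativistic velocity `v̂ = v/√(1+|v|²)`. -/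
noncomputable def vhat (v : EuclideanSpace ℝ (Fin 3)) : EuclideanSpace ℝ (Fin 3) :=
  (Real.sqrt (1 + ‖v‖ ^ 2))⁻¹ • v

/-- The kernel `a^{tt}(ω,v̂)` appearing in the representation of `∂ₜ² u`. -/
noncomputable def attKernel (ω v : EuclideanSpace ℝ (Fin 3)) : ℝ :=
  (3 * ‖vhat v‖ ^ 4 - ⟪ω, vhat v⟫ ^ 2 * ‖vhat v‖ ^ 2 - ‖vhat v‖ ^ 2
      + 3 * ⟪ω, vhat v⟫ ^ 2 + 4 * ⟪ω, vhat v⟫ * ‖vhat v‖ ^ 2)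
    / (1 + ⟪ω, vhat v⟫) ^ 4

namespace AttAux

open Metric Set

local notation "E3" => EuclideanSpace ℝ (Fin 3)
local notation "E2" => EuclideanSpace ℝ (Fin 2)

/-! ### The 1-D integral -/

lemma oneD (r : ℝ) (h0 : 0 < r) (h1 : r < 1) :
    ∫ s in (-1:ℝ)..1,
      (3*r^4 - (r*s)^2*r^2 - r^2 + 3*(r*s)^2 + 4*(r*s)*r^2)/(1+r*s)^4 = 0 := by
  have hpos : ∀ s : ℝ, s ∈ Set.uIcc (-1:ℝ) 1 → 0 < 1 + r*s := by
    intro s hs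
    rw [Set.uIcc_of_le (by norm_num)] at hs
    nlinarith [hs.1, hs.2]
  set Φ : ℝ → ℝ := fun s => r⁻¹ *
    (-(1-r^2)^2/(1+r*s)^3 + 3*(1-r^2)/(1+r*s)^2 - (3-r^2)/(1+r*s)) with hΦ
  have key : ∀ s ∈ Set.uIcc (-1:ℝ) 1, HasDerivAt Φ
      ((3*r^4 - (r*s)^2*r^2 - r^2 + 3*(r*s)^2 + 4*(r*s)*r^2)/(1+r*s)^4) s := by
    intro s hs
    have hu : (0:ℝ) < 1 + r*s := hpos s hs
    have hu' : (1 + r*s) ≠ 0 := hu.ne'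
    have hd : HasDerivAt (fun s : ℝ => 1 + r*s) r s := by
      simpa using ((hasDerivAt_id s).const_mul r).const_add 1
    have h3 : HasDerivAt (fun s : ℝ => (1+r*s)^3) (3*(1+r*s)^2*r) s := by
      simpa using (hd.fun_pow 3)
    have h2 : HasDerivAt (fun s : ℝ => (1+r*s)^2) (2*(1+r*s)^1*r) s := by
      simpa using (hd.fun_pow 2)
    have t1 : HasDerivAt (fun s : ℝ => -(1-r^2)^2/(1+r*s)^3)
        ((0*(1+r*s)^3 - (-(1-r^2)^2)*(3*(1+r*s)^2*r))/((1+r*s)^3)^2) s :=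
      (hasDerivAt_const s _).div h3 (pow_ne_zero _ hu')
    have t2 : HasDerivAt (fun s : ℝ => 3*(1-r^2)/(1+r*s)^2)
        ((0*(1+r*s)^2 - (3*(1-r^2))*(2*(1+r*s)^1*r))/((1+r*s)^2)^2) s :=
      (hasDerivAt_const s _).div h2 (pow_ne_zero _ hu')
    have t3 : HasDerivAt (fun s : ℝ => (3-r^2)/(1+r*s))
        ((0*(1+r*s) - (3-r^2)*r)/((1+r*s))^2) s := by
      simpa using (hasDerivAt_const s (3-r^2)).fun_div hd hu'
    have := (((t1.add t2).sub t3).const_mul r⁻¹)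
    refine this.congr_deriv ?_
    field_simp
    ring
  have hint : IntervalIntegrable
      (fun s => (3*r^4 - (r*s)^2*r^2 - r^2 + 3*(r*s)^2 + 4*(r*s)*r^2)/(1+r*s)^4)
      volume (-1) 1 := by
    apply ContinuousOn.intervalIntegrable
    apply ContinuousOn.div
    · fun_prop
    · fun_prop
    · intro s hs
      exact pow_ne_zero _ (hpos s hs).ne'
  rw [intervalIntegral.integral_eq_sub_of_hasDerivAt key hint]
  have ha : (1 + r*(1:ℝ)) = 1 + r := by ring
  have hb : (1 + r*(-1:ℝ)) = 1 - r := by ring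
  have h1r : (1:ℝ) + r ≠ 0 := by positivity
  have h1r' : (1:ℝ) - r ≠ 0 := by nlinarith
  simp only [hΦ, ha, hb]
  field_simp
  ring

/-! ### Step A: sphere integral vs ball integral -/

lemma stepA (g : ℝ → ℝ) (u : E3) :
    (∫ x : E3, (if ‖x‖ < 1 then g (⟪x, u⟫/‖x‖) else 0))
    = (∫ ω : sphere (0:E3) 1, g ⟪(ω:E3), u⟫ ∂((volume : Measure E3).toSphere)) * (1/3) := by
  have hdim : Module.finrank ℝ E3 = 3 := finrank_euclideanSpace_fin
  set G : E3 → ℝ := fun x => (if ‖x‖ < 1 then g (⟪x, u⟫/‖x‖) else 0) with hG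
  set F : sphere (0:E3) 1 × Ioi (0:ℝ) → ℝ :=
    fun p => g ⟪(p.1 : E3), u⟫ * (if p.2.1 < 1 then 1 else 0) with hF
  have step1 : (∫ x : E3, G x)
      = ∫ x : ({0}ᶜ : Set E3), G x.1 ∂((volume : Measure E3).comap Subtype.val) := by
    rw [integral_subtype_comap (measurableSet_singleton (0:E3)).compl G,
      MeasureTheory.restrict_compl_singleton]
  have step2 : (∫ x : ({0}ᶜ : Set E3), G x.1 ∂((volume : Measure E3).comap Subtype.val))
      = ∫ p : sphere (0:E3) 1 × Ioi (0:ℝ),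
          F p ∂((volume : Measure E3).toSphere.prod (.volumeIoiPow 2)) := by
    have h := (volume : Measure E3).measurePreserving_homeomorphUnitSphereProd
    rw [hdim] at h
    rw [← h.integral_comp (Homeomorph.measurableEmbedding _) F]
    apply integral_congr_ae
    filter_upwards with x
    have hx : (x : E3) ≠ 0 := x.2
    have hn : ‖(x:E3)‖ ≠ 0 := norm_ne_zero_iff.2 hx
    simp only [hF, hG, homeomorphUnitSphereProd_apply_fst_coe,
      homeomorphUnitSphereProd_apply_snd_coe, real_inner_smul_left]
    by_cases hlt : ‖(x:E3)‖ < 1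
    · simp [hlt, div_eq_inv_mul]
    · simp [hlt]
  have step3 : (∫ p : sphere (0:E3) 1 × Ioi (0:ℝ),
          F p ∂((volume : Measure E3).toSphere.prod (.volumeIoiPow 2)))
      = (∫ ω : sphere (0:E3) 1, g ⟪(ω:E3), u⟫ ∂((volume : Measure E3).toSphere))
        * (∫ ρ : Ioi (0:ℝ), (if ρ.1 < 1 then (1:ℝ) else 0) ∂(Measure.volumeIoiPow 2)) :=
    integral_prod_mul (fun ω : sphere (0:E3) 1 => g ⟪(ω:E3), u⟫)
      (fun ρ : Ioi (0:ℝ) => if ρ.1 < 1 then (1:ℝ) else 0)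
  have step4 : (∫ ρ : Ioi (0:ℝ), (if ρ.1 < 1 then (1:ℝ) else 0) ∂(Measure.volumeIoiPow 2))
      = 1/3 := by
    have : (fun ρ : Ioi (0:ℝ) => if ρ.1 < 1 then (1:ℝ) else 0)
        = Set.indicator (Iio (⟨1, mem_Ioi.2 one_pos⟩ : Ioi (0:ℝ))) (fun _ => (1:ℝ)) := by
      ext ρ
      rw [Set.indicator_apply]
      congr 1
    rw [this, integral_indicator_const _ measurableSet_Iio, measureReal_def,
      Measure.volumeIoiPow_apply_Iio]
    norm_num
  rw [step1, step2, step3, step4]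

/-! ### Step B1: rotation -/

lemma stepB1 (g : ℝ → ℝ) (u : E3) (hu : u ≠ 0) :
    (∫ x : E3, (if ‖x‖ < 1 then g (⟪x, u⟫/‖x‖) else 0))
    = ∫ y : E3, (if ‖y‖ < 1 then g (‖u‖ * y 0 / ‖y‖) else 0) := by
  have hnu : ‖u‖ ≠ 0 := norm_ne_zero_iff.2 hu
  have horth : Orthonormal ℝ (({0} : Set (Fin 3)).restrict (fun _ => ‖u‖⁻¹ • u)) := by
    constructor
    · intro i
      exact norm_smul_inv_norm (𝕜 := ℝ) hu
    · intro i j hij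
      exact absurd (Subtype.ext (by
        have hi : i.1 = 0 := i.2
        have hj : j.1 = 0 := j.2
        rw [hi, hj])) hij
  obtain ⟨b, hb⟩ := Orthonormal.exists_orthonormalBasis_extension_of_card_eq
    (by simp [finrank_euclideanSpace_fin]) horth
  have hb0 : b 0 = ‖u‖⁻¹ • u := hb 0 rfl
  have hrepr : b.repr u = ‖u‖ • EuclideanSpace.single 0 (1:ℝ) := by
    have hu' : u = ‖u‖ • b 0 := by
      rw [hb0, smul_smul, mul_inv_cancel₀ hnu, one_smul]
    rw [show b.repr u = b.repr (‖u‖ • b 0) by rw [← hu'], _root_.map_smul,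
      OrthonormalBasis.repr_self]
  have hmp := b.measurePreserving_repr_symm
  rw [← hmp.integral_comp (b.repr.symm.toHomeomorph.measurableEmbedding)
    (fun x => (if ‖x‖ < 1 then g (⟪x, u⟫/‖x‖) else 0))]
  apply integral_congr_ae
  filter_upwards with y
  have hnorm : ‖b.repr.symm y‖ = ‖y‖ := b.repr.symm.norm_map y
  have hinner : ⟪b.repr.symm y, u⟫ = ‖u‖ * y 0 := by
    have h2 := b.repr.inner_map_map (b.repr.symm y) u
    rw [b.repr.apply_symm_apply] at h2
    rw [← h2, hrepr, real_inner_smul_right, EuclideanSpace.inner_single_right]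
    simp [mul_comm]
  rw [hnorm, hinner]

/-! ### Step B2: coordinates -/

lemma stepB2 (g : ℝ → ℝ) (r : ℝ) :
    (∫ y : E3, (if ‖y‖ < 1 then g (r * y 0 / ‖y‖) else 0))
    = ∫ p : ℝ × (Fin 2 → ℝ),
        (if p.1^2 + ((p.2 0)^2 + (p.2 1)^2) < 1 then
          g (r * p.1 / Real.sqrt (p.1^2 + ((p.2 0)^2 + (p.2 1)^2))) else 0) := by
  have hES : ∀ y : E3, ‖y‖ = Real.sqrt ((y 0)^2 + ((y 1)^2 + (y 2)^2)) := by
    intro y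
    rw [EuclideanSpace.norm_eq, Fin.sum_univ_three]
    simp [Real.norm_eq_abs, sq_abs]
    ring_nf
  have h1 : (∫ y : E3, (if ‖y‖ < 1 then g (r * y 0 / ‖y‖) else 0))
      = ∫ y : E3, (if (y 0)^2 + ((y 1)^2 + (y 2)^2) < 1 then
          g (r * y 0 / Real.sqrt ((y 0)^2 + ((y 1)^2 + (y 2)^2))) else 0) := by
    apply integral_congr_ae
    filter_upwards with y
    have hsq : (y 0)^2 + ((y 1)^2 + (y 2)^2) = ‖y‖^2 := by
      rw [hES, Real.sq_sqrt (by positivity)]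
    have hn : ‖y‖ < 1 ↔ (y 0)^2 + ((y 1)^2 + (y 2)^2) < 1 := by
      rw [hsq]
      constructor
      · intro h; nlinarith [norm_nonneg y]
      · intro h; nlinarith [norm_nonneg y]
    rw [← hES]
    by_cases h : ‖y‖ < 1
    · rw [if_pos h, if_pos (hn.1 h)]
    · rw [if_neg h, if_neg (fun hc => h (hn.2 hc))]
  rw [h1]
  rw [← ((EuclideanSpace.volume_preserving_symm_measurableEquiv_toLp (Fin 3)).symm
      (MeasurableEquiv.toLp 2 (Fin 3 → ℝ)).symm).integral_comp
    (MeasurableEquiv.measurableEmbedding _) _]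
  rw [← (((volume_preserving_piFinSuccAbove (fun _ : Fin 3 => ℝ) 0)).symm
      (MeasurableEquiv.piFinSuccAbove (fun _ : Fin 3 => ℝ) 0)).integral_comp
    (MeasurableEquiv.measurableEmbedding _) _]
  rfl

/-! ### Step B3: Fubini and radial reduction on the 2-D slices -/

noncomputable def Fker (g : ℝ → ℝ) (r t ρ : ℝ) : ℝ :=
  if t^2 + ρ^2 < 1 then g (r * t / Real.sqrt (t^2 + ρ^2)) else 0

lemma stepB3 (g : ℝ → ℝ) (hg : Continuous g) (M : ℝ) (hM : ∀ s, |g s| ≤ M) (r : ℝ) :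
    (∫ p : ℝ × (Fin 2 → ℝ),
        (if p.1^2 + ((p.2 0)^2 + (p.2 1)^2) < 1 then
          g (r * p.1 / Real.sqrt (p.1^2 + ((p.2 0)^2 + (p.2 1)^2))) else 0))
    = ∫ t : ℝ, (2:ℕ) • (volume (ball (0:E2) 1)).toReal •
        (∫ ρ in Ioi (0:ℝ), ρ ^ 1 • Fker g r t ρ) := by
  have hM0 : 0 ≤ M := le_trans (abs_nonneg _) (hM 0)
  set Ψ : ℝ × (Fin 2 → ℝ) → ℝ := fun p =>
    (if p.1^2 + ((p.2 0)^2 + (p.2 1)^2) < 1 then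
      g (r * p.1 / Real.sqrt (p.1^2 + ((p.2 0)^2 + (p.2 1)^2))) else 0) with hΨ
  have hAmeas : MeasurableSet {p : ℝ × (Fin 2 → ℝ) | p.1^2 + ((p.2 0)^2 + (p.2 1)^2) < 1} := by
    apply measurableSet_lt _ measurable_const
    fun_prop
  have hval : Measurable fun p : ℝ × (Fin 2 → ℝ) =>
      g (r * p.1 / Real.sqrt (p.1^2 + ((p.2 0)^2 + (p.2 1)^2))) := by
    apply hg.measurable.comp
    apply Measurable.div
    · fun_prop
    · fun_prop
  have hΨmeas : Measurable Ψ := by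
    have : Ψ = Set.indicator {p : ℝ × (Fin 2 → ℝ) | p.1^2 + ((p.2 0)^2 + (p.2 1)^2) < 1}
        (fun p => g (r * p.1 / Real.sqrt (p.1^2 + ((p.2 0)^2 + (p.2 1)^2)))) := by
      funext p
      rw [Set.indicator_apply]
      rfl
    rw [this]
    exact hval.indicator hAmeas
  have hrect : MeasurableSet ((Icc (-1:ℝ) 1) ×ˢ (univ.pi fun _ : Fin 2 => Icc (-1:ℝ) 1)) :=
    measurableSet_Icc.prod (MeasurableSet.univ_pi fun _ => measurableSet_Icc)
  have hdom : Integrable (((Icc (-1:ℝ) 1) ×ˢ (univ.pi fun _ : Fin 2 => Icc (-1:ℝ) 1)).indicator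
      (fun _ => M)) volume := by
    rw [integrable_indicator_iff hrect]
    refine integrableOn_const (ne_of_lt ?_)
    rw [Measure.volume_eq_prod, Measure.prod_prod, Real.volume_Icc, volume_pi_pi]
    simp only [Real.volume_Icc]
    exact ENNReal.mul_lt_top ENNReal.ofReal_lt_top
      (ENNReal.prod_lt_top (fun i _ => ENNReal.ofReal_lt_top))
  have hΨint : Integrable Ψ volume := by
    refine hdom.mono' hΨmeas.aestronglyMeasurable ?_
    filter_upwards with p
    simp only [Real.norm_eq_abs, hΨ]
    by_cases h : p.1^2 + ((p.2 0)^2 + (p.2 1)^2) < 1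
    · rw [if_pos h]
      have hmem : p ∈ (Icc (-1:ℝ) 1) ×ˢ (univ.pi fun _ : Fin 2 => Icc (-1:ℝ) 1) := by
        constructor
        · constructor <;> nlinarith [sq_nonneg (p.2 0), sq_nonneg (p.2 1)]
        · intro i _
          have h00 : (p.2 0)^2 < 1 := by nlinarith [sq_nonneg p.1, sq_nonneg (p.2 1)]
          have h11 : (p.2 1)^2 < 1 := by nlinarith [sq_nonneg p.1, sq_nonneg (p.2 0)]
          fin_cases i
          · exact show p.2 0 ∈ Icc (-1:ℝ) 1 from ⟨by nlinarith, by nlinarith⟩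
          · exact show p.2 1 ∈ Icc (-1:ℝ) 1 from ⟨by nlinarith, by nlinarith⟩
      rw [Set.indicator_of_mem hmem]
      exact hM _
    · rw [if_neg h]
      simp only [abs_zero]
      exact Set.indicator_apply_nonneg (fun _ => hM0)
  have hfub : (∫ p : ℝ × (Fin 2 → ℝ), Ψ p)
      = ∫ t : ℝ, ∫ y : Fin 2 → ℝ, Ψ (t, y) := by
    rw [Measure.volume_eq_prod] at hΨint ⊢
    exact integral_prod Ψ hΨint
  rw [hfub]
  congr 1
  funext t
  have hinner : (∫ y : Fin 2 → ℝ, Ψ (t, y)) = ∫ w : E2, Fker g r t ‖w‖ := by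
    rw [← (EuclideanSpace.volume_preserving_symm_measurableEquiv_toLp (Fin 2)).integral_comp
      (MeasurableEquiv.measurableEmbedding _) (fun y => Ψ (t, y))]
    apply integral_congr_ae
    filter_upwards with w
    have hw : ((MeasurableEquiv.toLp 2 (Fin 2 → ℝ)).symm w 0)^2
        + ((MeasurableEquiv.toLp 2 (Fin 2 → ℝ)).symm w 1)^2 = ‖w‖^2 := by
      rw [EuclideanSpace.norm_eq, Fin.sum_univ_two, Real.sq_sqrt (by positivity)]
      simp only [Real.norm_eq_abs, sq_abs]
      rfl
    show Ψ (t, (MeasurableEquiv.toLp 2 (Fin 2 → ℝ)).symm w) = Fker g r t ‖w‖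
    rw [hΨ, Fker]
    simp only
    rw [hw]
  rw [hinner]
  have := integral_fun_norm_addHaar (volume : Measure E2) (Fker g r t)
  rw [finrank_euclideanSpace_fin] at this
  exact this

lemma Fker_zero (g : ℝ → ℝ) (r t : ℝ) (ht : 1 ≤ t^2) :
    (∫ ρ in Ioi (0:ℝ), ρ ^ 1 • Fker g r t ρ) = 0 := by
  have : ∀ ρ ∈ Ioi (0:ℝ), ρ ^ 1 • Fker g r t ρ = 0 := by
    intro ρ _
    rw [Fker, if_neg (by nlinarith [sq_nonneg ρ]), smul_zero]
  rw [setIntegral_congr_fun measurableSet_Ioi this]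
  simp

lemma I_eq (g : ℝ → ℝ) (hg : Continuous g) (r : ℝ) (t : ℝ) (ht : t ∈ Set.uIcc (-1:ℝ) 1) :
    (∫ ρ in Ioi (0:ℝ), ρ ^ 1 • Fker g r t ρ) = ∫ w in |t|..1, w * g (r * t / w) := by
  rw [Set.uIcc_of_le (by norm_num)] at ht
  have habs : |t| ≤ 1 := abs_le.2 ⟨ht.1, ht.2⟩
  by_cases ht0 : t = 0
  · subst ht0
    have key : ∀ ρ ∈ Ioi (0:ℝ), ρ ^ 1 • Fker g r 0 ρ
        = (Ioo (0:ℝ) 1).indicator (fun ρ => ρ * g 0) ρ := by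
      intro ρ hρ
      rw [Set.mem_Ioi] at hρ
      rw [Fker, Set.indicator_apply]
      by_cases h1 : ρ < 1
      · rw [if_pos (by nlinarith), if_pos (by exact ⟨hρ, h1⟩)]
        simp
      · rw [if_neg (by nlinarith), if_neg (by simp [Set.mem_Ioo]; intro _; linarith)]
        simp
    rw [setIntegral_congr_fun measurableSet_Ioi key,
      setIntegral_indicator measurableSet_Ioo,
      Set.inter_eq_self_of_subset_right Set.Ioo_subset_Ioi_self,
      ← integral_Ioc_eq_integral_Ioo, ← intervalIntegral.integral_of_le zero_le_one]
    rw [show |(0:ℝ)| = 0 by simp]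
    apply intervalIntegral.integral_congr
    intro w _
    simp
  · by_cases ht1 : t^2 < 1
    · -- main case
      have ht2 : (0:ℝ) < t^2 := by positivity
      set c := Real.sqrt (1 - t^2) with hc
      have hc2 : c^2 = 1 - t^2 := Real.sq_sqrt (by linarith)
      have hc0 : 0 < c := Real.sqrt_pos.2 (by linarith)
      have hsq : ∀ ρ : ℝ, 0 < t^2 + ρ^2 := fun ρ => by nlinarith [sq_nonneg ρ]
      have hsqrtne : ∀ ρ : ℝ, Real.sqrt (t^2 + ρ^2) ≠ 0 :=
        fun ρ => (Real.sqrt_pos.2 (hsq ρ)).ne'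
      have key : ∀ ρ ∈ Ioi (0:ℝ), ρ ^ 1 • Fker g r t ρ
          = (Ioo (0:ℝ) c).indicator (fun ρ => ρ * g (r * t / Real.sqrt (t^2 + ρ^2))) ρ := by
        intro ρ hρ
        rw [Set.mem_Ioi] at hρ
        rw [Fker, Set.indicator_apply]
        by_cases h1 : ρ < c
        · rw [if_pos (by nlinarith), if_pos ⟨hρ, h1⟩]
          simp
        · rw [if_neg (by nlinarith), if_neg (by simp [Set.mem_Ioo]; intro _; linarith)]
          simp
      rw [setIntegral_congr_fun measurableSet_Ioi key,
        setIntegral_indicator measurableSet_Ioo,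
        Set.inter_eq_self_of_subset_right Set.Ioo_subset_Ioi_self,
        ← integral_Ioc_eq_integral_Ioo, ← intervalIntegral.integral_of_le hc0.le]
      -- substitution w = √(t² + ρ²)
      have hsubst : (∫ ρ in (0:ℝ)..c, (fun ρ => ρ / Real.sqrt (t^2 + ρ^2)) ρ •
            ((fun w => w * g (r * t / w)) ∘ (fun ρ => Real.sqrt (t^2 + ρ^2))) ρ)
          = ∫ w in Real.sqrt (t^2 + 0^2)..Real.sqrt (t^2 + c^2), w * g (r * t / w) := by
        apply intervalIntegral.integral_comp_smul_deriv'
        · intro x _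
          have hx : t^2 + x^2 ≠ 0 := (hsq x).ne'
          have hinner : HasDerivAt (fun ρ : ℝ => t^2 + ρ^2) (2*x) x := by
            simpa using ((hasDerivAt_pow 2 x).const_add (t^2))
          have := (Real.hasDerivAt_sqrt hx).comp x hinner
          refine this.congr_deriv ?_
          field_simp
        · apply ContinuousOn.div
          · fun_prop
          · fun_prop
          · intro x _
            exact hsqrtne x
        · apply ContinuousOn.mono (s := Ioi (0:ℝ))
          · apply ContinuousOn.mul continuousOn_id
            apply hg.comp_continuousOn
            exact ContinuousOn.div continuousOn_const continuousOn_id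
              (fun w hw => ne_of_gt hw)
          · intro w hw
            obtain ⟨ρ, _, hρw⟩ := hw
            rw [← hρw]
            exact Real.sqrt_pos.2 (hsq ρ)
      have hpt : ∀ ρ : ℝ, (fun ρ => ρ / Real.sqrt (t^2 + ρ^2)) ρ •
            ((fun w => w * g (r * t / w)) ∘ (fun ρ => Real.sqrt (t^2 + ρ^2))) ρ
          = ρ * g (r * t / Real.sqrt (t^2 + ρ^2)) := by
        intro ρ
        simp only [Function.comp_apply, smul_eq_mul]
        field_simp
      have hend0 : Real.sqrt (t^2 + 0^2) = |t| := by
        rw [show t^2 + 0^2 = t^2 by ring, Real.sqrt_sq_eq_abs]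
      have hend1 : Real.sqrt (t^2 + c^2) = 1 := by
        rw [hc2, show t^2 + (1 - t^2) = 1 by ring, Real.sqrt_one]
      rw [← intervalIntegral.integral_congr (fun ρ _ => hpt ρ), hsubst, hend0, hend1]
    · -- |t| = 1
      have h1le : 1 ≤ |t| := by
        by_contra h
        push_neg at h
        exact ht1 (by nlinarith [abs_nonneg t, sq_abs t])
      have habseq : |t| = 1 := le_antisymm habs h1le
      rw [Fker_zero g r t (by nlinarith [sq_abs t]), habseq,
        intervalIntegral.integral_same]

lemma stepB4 (g : ℝ → ℝ) (hg : Continuous g) (M : ℝ) (hM : ∀ s, |g s| ≤ M) (r : ℝ)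
    (h1 : (∫ s in (-1:ℝ)..1, g (r * s)) = 0) :
    (∫ t : ℝ, ∫ ρ in Ioi (0:ℝ), ρ ^ 1 • Fker g r t ρ) = 0 := by
  have hM0 : 0 ≤ M := le_trans (abs_nonneg _) (hM 0)
  set I : ℝ → ℝ := fun t => ∫ ρ in Ioi (0:ℝ), ρ ^ 1 • Fker g r t ρ with hI
  have hIzero : ∀ t : ℝ, t ∉ Set.Ioo (-1:ℝ) 1 → I t = 0 := by
    intro t ht
    apply Fker_zero
    rw [Set.mem_Ioo] at ht
    push_neg at ht
    rcases le_or_gt t (-1) with h | h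
    · nlinarith
    · have := ht h
      nlinarith
  set Φ : ℝ × ℝ → ℝ := fun q =>
    if |q.1| < q.2 ∧ q.2 ≤ 1 then q.2 * g (r * q.1 / q.2) else 0 with hΦ
  have hA_T : ∀ t ∈ Set.uIcc (-1:ℝ) 1,
      (∫ w : ℝ, Φ (t, w)) = ∫ ρ in Ioi (0:ℝ), ρ ^ 1 • Fker g r t ρ := by
    intro t ht
    rw [I_eq g hg r t ht]
    rw [Set.uIcc_of_le (by norm_num)] at ht
    have habs : |t| ≤ 1 := abs_le.2 ⟨ht.1, ht.2⟩
    have hpt : ∀ w : ℝ, Φ (t, w)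
        = (Ioc |t| 1).indicator (fun w => w * g (r * t / w)) w := by
      intro w
      show (if |t| < w ∧ w ≤ 1 then w * g (r * t / w) else 0)
        = (Ioc |t| 1).indicator (fun w => w * g (r * t / w)) w
      rw [Set.indicator_apply]
      simp only [Set.mem_Ioc]
    rw [integral_congr_ae (Filter.Eventually.of_forall hpt),
      integral_indicator measurableSet_Ioc,
      ← intervalIntegral.integral_of_le habs]
  have hA_zero : ∀ t : ℝ, t ∉ Set.uIcc (-1:ℝ) 1 → (∫ w : ℝ, Φ (t, w)) = 0 := by
    intro t ht
    rw [Set.uIcc_of_le (by norm_num), Set.mem_Icc] at ht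
    push_neg at ht
    have habs : 1 < |t| := by
      rcases lt_or_ge t (-1) with h | h
      · rw [abs_of_neg (by linarith)]; linarith
      · have := ht h
        rw [abs_of_pos (by linarith)]; linarith
    have : ∀ w : ℝ, Φ (t, w) = 0 := by
      intro w
      show (if |t| < w ∧ w ≤ 1 then w * g (r * t / w) else 0) = 0
      rw [if_neg]
      rintro ⟨h1', h2'⟩
      linarith
    rw [integral_congr_ae (Filter.Eventually.of_forall this)]
    simp
  -- support reduction of the outer integral
  have houter : (∫ t : ℝ, I t) = ∫ t in (-1:ℝ)..1, I t := by
    have hind : ∀ t : ℝ, I t = (Set.Ioo (-1:ℝ) 1).indicator I t := by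
      intro t
      rw [Set.indicator_apply]
      by_cases h : t ∈ Set.Ioo (-1:ℝ) 1
      · rw [if_pos h]
      · rw [if_neg h, hIzero t h]
    calc ∫ t : ℝ, I t = ∫ t : ℝ, (Set.Ioo (-1:ℝ) 1).indicator I t :=
          integral_congr_ae (Filter.Eventually.of_forall hind)
      _ = ∫ t in Set.Ioo (-1:ℝ) 1, I t := integral_indicator measurableSet_Ioo
      _ = ∫ t in Set.Ioc (-1:ℝ) 1, I t := (integral_Ioc_eq_integral_Ioo).symm
      _ = ∫ t in (-1:ℝ)..1, I t := (intervalIntegral.integral_of_le (by norm_num)).symm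
  rw [houter]
  have hcongr : (∫ t in (-1:ℝ)..1, I t) = ∫ t in (-1:ℝ)..1, ∫ w : ℝ, Φ (t, w) :=
    intervalIntegral.integral_congr (fun t ht => (hA_T t ht).symm)
  rw [hcongr]
  -- back to full-line integral
  have houter2 : (∫ t in (-1:ℝ)..1, ∫ w : ℝ, Φ (t, w)) = ∫ t : ℝ, ∫ w : ℝ, Φ (t, w) := by
    have hind : ∀ t : ℝ, (∫ w : ℝ, Φ (t, w))
        = (Set.Icc (-1:ℝ) 1).indicator (fun t => ∫ w : ℝ, Φ (t, w)) t := by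
      intro t
      rw [Set.indicator_apply]
      by_cases h : t ∈ Set.Icc (-1:ℝ) 1
      · rw [if_pos h]
      · rw [if_neg h, hA_zero t (by rwa [Set.uIcc_of_le (by norm_num)])]
    calc (∫ t in (-1:ℝ)..1, ∫ w : ℝ, Φ (t, w))
        = ∫ t in Set.Ioc (-1:ℝ) 1, ∫ w : ℝ, Φ (t, w) :=
          intervalIntegral.integral_of_le (by norm_num)
      _ = ∫ t in Set.Icc (-1:ℝ) 1, ∫ w : ℝ, Φ (t, w) := (integral_Icc_eq_integral_Ioc).symm
      _ = ∫ t : ℝ, (Set.Icc (-1:ℝ) 1).indicator (fun t => ∫ w : ℝ, Φ (t, w)) t :=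
          (integral_indicator measurableSet_Icc).symm
      _ = ∫ t : ℝ, ∫ w : ℝ, Φ (t, w) :=
          integral_congr_ae (Filter.Eventually.of_forall (fun t => (hind t).symm))
  rw [houter2]
  -- Fubini swap
  have hS : MeasurableSet {q : ℝ × ℝ | |q.1| < q.2 ∧ q.2 ≤ 1} := by
    apply MeasurableSet.inter
    · exact measurableSet_lt (continuous_abs.comp continuous_fst).measurable measurable_snd
    · exact measurableSet_le measurable_snd measurable_const
  have hΦmeas : Measurable Φ := by
    have : Φ = Set.indicator {q : ℝ × ℝ | |q.1| < q.2 ∧ q.2 ≤ 1}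
        (fun q => q.2 * g (r * q.1 / q.2)) := by
      funext q
      rw [Set.indicator_apply]
      rfl
    rw [this]
    exact (measurable_snd.mul (hg.measurable.comp
      ((measurable_fst.const_mul r).div measurable_snd))).indicator hS
  have hΦint : Integrable Φ (volume.prod volume) := by
    have hrect : MeasurableSet ((Icc (-1:ℝ) 1) ×ˢ (Icc (0:ℝ) 1)) :=
      measurableSet_Icc.prod measurableSet_Icc
    have hdom : Integrable (((Icc (-1:ℝ) 1) ×ˢ (Icc (0:ℝ) 1)).indicator
        (fun _ => M)) (volume.prod volume) := by
      rw [← Measure.volume_eq_prod, integrable_indicator_iff hrect]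
      refine integrableOn_const (ne_of_lt ?_)
      rw [Measure.volume_eq_prod, Measure.prod_prod, Real.volume_Icc, Real.volume_Icc]
      exact ENNReal.mul_lt_top ENNReal.ofReal_lt_top ENNReal.ofReal_lt_top
    have hmeas' : AEStronglyMeasurable Φ (volume.prod volume) := by
      rw [← Measure.volume_eq_prod]
      exact hΦmeas.aestronglyMeasurable
    refine hdom.mono' hmeas' ?_
    filter_upwards with q
    simp only [Real.norm_eq_abs, hΦ]
    by_cases h : |q.1| < q.2 ∧ q.2 ≤ 1
    · rw [if_pos h]
      have hq2 : 0 < q.2 := lt_of_le_of_lt (abs_nonneg q.1) h.1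
      have hmem : q ∈ (Icc (-1:ℝ) 1) ×ˢ (Icc (0:ℝ) 1) := by
        constructor
        · have := abs_lt.1 (lt_of_lt_of_le h.1 h.2)
          exact ⟨this.1.le, this.2.le⟩
        · exact ⟨hq2.le, h.2⟩
      rw [Set.indicator_of_mem hmem]
      calc |q.2 * g (r * q.1 / q.2)| = |q.2| * |g (r * q.1 / q.2)| := abs_mul _ _
        _ ≤ 1 * M := by
            apply mul_le_mul _ (hM _) (abs_nonneg _) zero_le_one
            rw [abs_of_pos hq2]; exact h.2
        _ = M := one_mul M
    · rw [if_neg h]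
      simp only [abs_zero]
      exact Set.indicator_apply_nonneg (fun _ => hM0)
  have hswap : (∫ t : ℝ, ∫ w : ℝ, Φ (t, w)) = ∫ w : ℝ, ∫ t : ℝ, Φ (t, w) := by
    exact integral_integral_swap (f := fun t w => Φ (t, w)) hΦint
  rw [hswap]
  -- each w-slice vanishes
  have hslice : ∀ w : ℝ, (∫ t : ℝ, Φ (t, w)) = 0 := by
    intro w
    by_cases hw : 0 < w ∧ w ≤ 1
    · have hw0 : w ≠ 0 := hw.1.ne'
      have hpt : ∀ t : ℝ, Φ (t, w)
          = (Ioo (-w) w).indicator (fun t => w * g (r * t / w)) t := by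
        intro t
        show (if |t| < w ∧ w ≤ 1 then w * g (r * t / w) else 0)
          = (Ioo (-w) w).indicator (fun t => w * g (r * t / w)) t
        rw [Set.indicator_apply]
        simp only [Set.mem_Ioo]
        by_cases hc : |t| < w
        · rw [if_pos ⟨hc, hw.2⟩, if_pos (abs_lt.1 hc)]
        · rw [if_neg (fun hcc => hc hcc.1), if_neg (fun hcc => hc (abs_lt.2 hcc))]
      rw [integral_congr_ae (Filter.Eventually.of_forall hpt),
        integral_indicator measurableSet_Ioo, ← integral_Ioc_eq_integral_Ioo,
        ← intervalIntegral.integral_of_le (by linarith [hw.1] : -w ≤ w)]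
      have hsub := intervalIntegral.inv_mul_integral_comp_div
        (f := fun s => w * g (r * s)) (a := -w) (b := w) (c := w)
      rw [neg_div, div_self hw0] at hsub
      have hcg : (∫ x in (-w)..w, w * g (r * x / w))
          = ∫ x in (-w)..w, w * g (r * (x / w)) := by
        apply intervalIntegral.integral_congr
        intro x _
        simp only [mul_div_assoc]
      rw [hcg]
      have hrhs : (∫ x in (-1:ℝ)..1, w * g (r * x)) = 0 := by
        rw [intervalIntegral.integral_const_mul, h1, mul_zero]
      rw [hrhs] at hsub
      rcases mul_eq_zero.1 hsub with h | h
      · exact absurd h (inv_ne_zero hw0)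
      · exact h
    · have hpt : ∀ t : ℝ, Φ (t, w) = 0 := by
        intro t
        show (if |t| < w ∧ w ≤ 1 then w * g (r * t / w) else 0) = 0
        rw [if_neg]
        rintro ⟨ha, hb⟩
        exact hw ⟨lt_of_le_of_lt (abs_nonneg t) ha, hb⟩
      rw [integral_congr_ae (Filter.Eventually.of_forall hpt)]
      simp
  rw [integral_congr_ae (Filter.Eventually.of_forall hslice)]
  simp


/-! ### Step B: the ball integral vanishes -/

lemma stepB (g : ℝ → ℝ) (hg : Continuous g) (M : ℝ) (hM : ∀ s, |g s| ≤ M)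
    (u : E3) (hu : u ≠ 0)
    (h1 : (∫ s in (-1:ℝ)..1, g (‖u‖ * s)) = 0) :
    (∫ x : E3, (if ‖x‖ < 1 then g (⟪x, u⟫/‖x‖) else 0)) = 0 := by
  rw [stepB1 g u hu, stepB2 g ‖u‖, stepB3 g hg M hM ‖u‖]
  have hpt : ∀ t : ℝ, (2:ℕ) • (volume (ball (0:E2) 1)).toReal •
        (∫ ρ in Ioi (0:ℝ), ρ ^ 1 • Fker g ‖u‖ t ρ)
      = (2 * (volume (ball (0:E2) 1)).toReal) *
        (∫ ρ in Ioi (0:ℝ), ρ ^ 1 • Fker g ‖u‖ t ρ) := by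
    intro t
    simp only [nsmul_eq_mul, smul_eq_mul, Nat.cast_ofNat]
    ring
  rw [integral_congr_ae (Filter.Eventually.of_forall hpt), integral_const_mul,
    stepB4 g hg M hM ‖u‖ h1, mul_zero]

end AttAux

/-- The averaging property of the kernel `a^{tt}`: its integral over the unit sphere
vanishes for every `v ∈ ℝ³`. -/
theorem attKernel_sphere_average_zero (v : EuclideanSpace ℝ (Fin 3)) :
    ∫ ω : Metric.sphere (0 : EuclideanSpace ℝ (Fin 3)) 1,
        attKernel (ω : EuclideanSpace ℝ (Fin 3)) v
      ∂((volume : Measure (EuclideanSpace ℝ (Fin 3))).toSphere)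
    = 0 := by
  by_cases hv : v = 0
  · subst hv
    have hz : ∀ ω : Metric.sphere (0 : EuclideanSpace ℝ (Fin 3)) 1,
        attKernel (ω : EuclideanSpace ℝ (Fin 3)) 0 = 0 := by
      intro ω
      simp [attKernel, vhat]
    rw [integral_congr_ae (Filter.Eventually.of_forall hz)]
    simp
  · set u : EuclideanSpace ℝ (Fin 3) := vhat v with hudef
    have hs : (0:ℝ) < Real.sqrt (1 + ‖v‖ ^ 2) := Real.sqrt_pos.2 (by positivity)
    have hu : u ≠ 0 := by
      rw [hudef, vhat]
      exact smul_ne_zero (inv_ne_zero hs.ne') hv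
    set r : ℝ := ‖u‖ with hrdef
    have hr0 : 0 < r := norm_pos_iff.2 hu
    have hr1 : r < 1 := by
      have hnorm : r = ‖v‖ / Real.sqrt (1 + ‖v‖ ^ 2) := by
        rw [hrdef, hudef, vhat, norm_smul, Real.norm_eq_abs,
          abs_of_pos (inv_pos.2 hs), div_eq_inv_mul]
      rw [hnorm, div_lt_one hs]
      calc ‖v‖ = Real.sqrt (‖v‖^2) := (Real.sqrt_sq (norm_nonneg v)).symm
        _ < Real.sqrt (1 + ‖v‖^2) := Real.sqrt_lt_sqrt (by positivity) (by linarith)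
    -- the clamped kernel profile
    set cl : ℝ → ℝ := fun s => max (-r) (min r s) with hcl
    set gg : ℝ → ℝ := fun s =>
      (3*r^4 - (cl s)^2*r^2 - r^2 + 3*(cl s)^2 + 4*(cl s)*r^2) / (1 + cl s)^4 with hgg
    have hcl_mem : ∀ s : ℝ, cl s ∈ Set.Icc (-r) r := by
      intro s
      constructor
      · exact le_max_left _ _
      · exact max_le (by linarith) (min_le_left _ _)
    have hcl_id : ∀ s : ℝ, |s| ≤ r → cl s = s := by
      intro s hsr
      have h1 := abs_le.1 hsr
      rw [hcl]
      simp only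
      rw [min_eq_right h1.2, max_eq_right h1.1]
    have hden : ∀ s : ℝ, 0 < 1 + cl s := by
      intro s
      have := (hcl_mem s).1
      linarith
    have hg_cont : Continuous gg := by
      rw [hgg]
      have hclc : Continuous cl := by
        rw [hcl]
        fun_prop
      apply Continuous.div
      · fun_prop
      · fun_prop
      · intro s
        exact pow_ne_zero _ (hden s).ne'
    obtain ⟨M, hMb⟩ : ∃ M : ℝ, ∀ s, |gg s| ≤ M := by
      obtain ⟨M, hM⟩ := (isCompact_Icc (a := -r) (b := r)).exists_bound_of_continuousOn
        (hg_cont.continuousOn (s := Set.Icc (-r) r))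
      refine ⟨M, fun s => ?_⟩
      have hmem := hcl_mem s
      have hcc : cl (cl s) = cl s := hcl_id (cl s) (abs_le.2 ⟨hmem.1, hmem.2⟩)
      have := hM (cl s) hmem
      rw [Real.norm_eq_abs] at this
      calc |gg s| = |gg (cl s)| := by rw [hgg]; simp only; rw [hcc]
        _ ≤ M := this
    have h1 : (∫ s in (-1:ℝ)..1, gg (‖u‖ * s)) = 0 := by
      have hcongr : Set.EqOn (fun s => gg (‖u‖ * s))
          (fun s => (3*r^4 - (r*s)^2*r^2 - r^2 + 3*(r*s)^2 + 4*(r*s)*r^2)/(1+r*s)^4)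
          (Set.uIcc (-1:ℝ) 1) := by
        intro s hs
        rw [Set.uIcc_of_le (by norm_num), Set.mem_Icc] at hs
        have habs : |‖u‖ * s| ≤ r := by
          rw [abs_mul, abs_norm, ← hrdef]
          calc r * |s| ≤ r * 1 := by
                apply mul_le_mul_of_nonneg_left _ hr0.le
                exact abs_le.2 ⟨hs.1, hs.2⟩
            _ = r := mul_one r
        simp only [hgg]
        rw [hcl_id _ habs, ← hrdef]
      rw [intervalIntegral.integral_congr hcongr]
      exact AttAux.oneD r hr0 hr1
    have hker : ∀ ω : Metric.sphere (0 : EuclideanSpace ℝ (Fin 3)) 1,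
        attKernel (ω : EuclideanSpace ℝ (Fin 3)) v
          = gg ⟪(ω : EuclideanSpace ℝ (Fin 3)), u⟫ := by
      intro ω
      have hω : ‖(ω : EuclideanSpace ℝ (Fin 3))‖ = 1 :=
        mem_sphere_zero_iff_norm.1 ω.2
      have habs : |⟪(ω : EuclideanSpace ℝ (Fin 3)), u⟫| ≤ r := by
        calc |⟪(ω : EuclideanSpace ℝ (Fin 3)), u⟫|
            ≤ ‖(ω : EuclideanSpace ℝ (Fin 3))‖ * ‖u‖ := abs_real_inner_le_norm _ _
          _ = r := by rw [hω, one_mul, hrdef]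
      rw [hgg]
      simp only
      rw [hcl_id _ habs, attKernel, ← hudef, ← hrdef]
    rw [integral_congr_ae (Filter.Eventually.of_forall hker)]
    have hA := AttAux.stepA gg u
    have hB := AttAux.stepB gg hg_cont M hMb u hu h1
    rw [hB] at hA
    linarith [hA]
end

section
/- Under the hypotheses of the method of characteristics with f₀, g ∈ C¹ (but not necessarily C²), the derivative ∂_z f exists and satisfies ∂_z f(t,z) = (∂_z f₀)(Z(0,t,z)) - ∫₀ᵗ (∂_z f)(s, Z(s,t,z))·(∂_z G)(s, Z(s,t,z)) ds + ∫₀ᵗ (∂_z g)(s, Z(s,t,z)) ds. -/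
set_option synthInstance.maxHeartbeats 2000000
set_option maxHeartbeats 4000000

open Set MeasureTheory intervalIntegral

section Aux
variable {H : Type*} [NormedAddCommGroup H] [NormedSpace ℝ H]
  {E : Type*} [NormedAddCommGroup E] [NormedSpace ℝ E]
  {F : Type*} [NormedAddCommGroup F] [NormedSpace ℝ F]

theorem aux_hasFDerivAt_partial (Φ : H → E → F) {s : H} {x : E}
    (h : DifferentiableAt ℝ (fun p : H × E => Φ p.1 p.2) (s, x)) :
    HasFDerivAt (Φ s)
      ((fderiv ℝ (fun p : H × E => Φ p.1 p.2) (s, x)).comp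
        (ContinuousLinearMap.inr ℝ H E)) x := by
  exact h.hasFDerivAt.comp x (hasFDerivAt_prodMk_right s x)

theorem aux_cont_partialFDeriv {Φ : H → E → F}
    (h : ContDiff ℝ 1 (fun p : H × E => Φ p.1 p.2)) :
    Continuous fun p : H × E => fderiv ℝ (Φ p.1) p.2 := by
  have key : ∀ p : H × E, fderiv ℝ (Φ p.1) p.2
      = (fderiv ℝ (fun p : H × E => Φ p.1 p.2) p).comp (ContinuousLinearMap.inr ℝ H E) :=
    fun p => (aux_hasFDerivAt_partial Φ (h.differentiable one_ne_zero (p.1, p.2))).fderiv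
  simp_rw [key]
  exact (h.continuous_fderiv one_ne_zero).clm_comp continuous_const

theorem aux_hasFDerivAt_intervalIntegral [ProperSpace E] [CompleteSpace F] {Φ : ℝ → E → F}
    (hΦ : ContDiff ℝ 1 (fun p : ℝ × E => Φ p.1 p.2)) (a b : ℝ) (z₀ : E) :
    HasFDerivAt (fun z => ∫ s in a..b, Φ s z)
      (∫ s in a..b, fderiv ℝ (Φ s) z₀) z₀ := by
  obtain ⟨C, hC⟩ := ((isCompact_uIcc (a := a) (b := b)).prod
    (isCompact_closedBall z₀ 1)).exists_bound_of_continuousOn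
    (aux_cont_partialFDeriv hΦ).continuousOn
  apply intervalIntegral.hasFDerivAt_integral_of_dominated_of_fderiv_le
    (F' := fun x t => fderiv ℝ (Φ t) x) (bound := fun _ => C) (s := Metric.ball z₀ 1) (Metric.ball_mem_nhds z₀ one_pos)
  · exact Filter.Eventually.of_forall fun x =>
      (hΦ.continuous.comp (continuous_id.prodMk continuous_const)).aestronglyMeasurable
  · exact (hΦ.continuous.comp (continuous_id.prodMk continuous_const)).intervalIntegrable a b
  · exact ((aux_cont_partialFDeriv hΦ).comp
      (continuous_id.prodMk continuous_const)).aestronglyMeasurable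
  · refine MeasureTheory.ae_of_all _ fun r hr x hx => hC (r, x) ⟨uIoc_subset_uIcc hr,
      Metric.ball_subset_closedBall hx⟩
  · exact intervalIntegrable_const
  · exact MeasureTheory.ae_of_all _ fun r hr x hx =>
      (aux_hasFDerivAt_partial Φ (hΦ.differentiable one_ne_zero (r, x))).differentiableAt.hasFDerivAt

end Aux

section Group
variable {E : Type*} [NormedAddCommGroup E] [NormedSpace ℝ E] [ProperSpace E]

/-- Lipschitz bound for a C¹ vector field on a window. -/
theorem aux_exists_lip (G : ℝ → E → E)
    (hG : ContDiff ℝ 1 (fun p : ℝ × E => G p.1 p.2)) (a₀ R : ℝ) :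
    ∃ K : NNReal, ∀ t ∈ Icc (a₀ - 1) (a₀ + 1),
      LipschitzOnWith K (G t) (Metric.closedBall (0 : E) R) := by
  obtain ⟨C, hC⟩ := ((isCompact_Icc (a := a₀ - 1) (b := a₀ + 1)).prod
    (isCompact_closedBall (0 : E) R)).exists_bound_of_continuousOn
    (aux_cont_partialFDeriv hG).continuousOn
  refine ⟨C.toNNReal, fun t ht => ?_⟩
  apply Convex.lipschitzOnWith_of_nnnorm_fderiv_le
    (fun x _ => (aux_hasFDerivAt_partial G (hG.differentiable one_ne_zero (t, x))).differentiableAt)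
    ?_ (convex_closedBall _ _)
  intro x hx
  have := hC (t, x) ⟨ht, hx⟩
  rw [← norm_toNNReal]
  exact Real.toNNReal_mono this

theorem aux_flow_group (G : ℝ → E → E) (Z : ℝ → ℝ → E → E)
    (hG : ContDiff ℝ 1 (fun p : ℝ × E => G p.1 p.2))
    (hZcont : ∀ b w, Continuous (fun r => Z r b w))
    (hZinit : ∀ t z, Z t t z = z)
    (hZflow : ∀ s t z, HasDerivAt (fun s' => Z s' t z) (G s (Z s t z)) s) :
    ∀ a b c z, Z a b (Z b c z) = Z a c z := by
  intro a b c z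
  have hS : {r | Z r b (Z b c z) = Z r c z} = univ := by
    apply IsClopen.eq_univ ?_ ⟨b, by simp [hZinit]⟩
    constructor
    · exact isClosed_eq (hZcont _ _) (hZcont _ _)
    · rw [isOpen_iff_mem_nhds]
      intro a₀ ha₀
      -- choose radius bounding both trajectories on the window
      obtain ⟨R₁, hR₁⟩ := (isCompact_Icc (a := a₀ - 1) (b := a₀ + 1)).exists_bound_of_continuousOn
        (hZcont b (Z b c z)).continuousOn
      obtain ⟨R₂, hR₂⟩ := (isCompact_Icc (a := a₀ - 1) (b := a₀ + 1)).exists_bound_of_continuousOn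
        (hZcont c z).continuousOn
      set R := max R₁ R₂ with hR
      obtain ⟨K, hK⟩ := aux_exists_lip G hG a₀ R
      set sets : ℝ → Set E := fun r =>
        if r ∈ Icc (a₀ - 1) (a₀ + 1) then Metric.closedBall (0 : E) R else ∅ with hsets
      have hv : ∀ r, LipschitzOnWith K (G r) (sets r) := by
        intro r
        by_cases hr : r ∈ Icc (a₀ - 1) (a₀ + 1)
        · rw [hsets]; simp only [if_pos hr]; exact hK r hr
        · rw [hsets]; simp only [if_neg hr]; exact lipschitzOnWith_empty _ _
      have hIoo : Ioo (a₀ - 1) (a₀ + 1) ∈ nhds a₀ :=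
        isOpen_Ioo.mem_nhds ⟨by linarith, by linarith⟩
      have hev : ∀ᶠ r in nhds a₀,
          (HasDerivAt (fun r' => Z r' b (Z b c z)) (G r (Z r b (Z b c z))) r ∧
            Z r b (Z b c z) ∈ sets r) ∧
          (HasDerivAt (fun r' => Z r' c z) (G r (Z r c z)) r ∧ Z r c z ∈ sets r) := by
        filter_upwards [hIoo] with r hr
        have hr' : r ∈ Icc (a₀ - 1) (a₀ + 1) := Ioo_subset_Icc_self hr
        refine ⟨⟨hZflow r b _, ?_⟩, ⟨hZflow r c z, ?_⟩⟩
        · rw [hsets]; simp only [if_pos hr']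
          exact mem_closedBall_zero_iff.mpr ((hR₁ r hr').trans (le_max_left _ _))
        · rw [hsets]; simp only [if_pos hr']
          exact mem_closedBall_zero_iff.mpr ((hR₂ r hr').trans (le_max_right _ _))
      have := ODE_solution_unique_of_eventually (Filter.Eventually.of_forall hv)
        (hev.mono fun r h => h.1) (hev.mono fun r h => h.2) ha₀
      exact this
  have := hS ▸ mem_univ a
  exact this

end Group

theorem aux_inverse_hasDerivAt {E : Type*} [NormedAddCommGroup E] [NormedSpace ℝ E]
    [CompleteSpace E] (W V : ℝ → E →L[ℝ] E) (A : E →L[ℝ] E) (s : ℝ)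
    (val_inv : ∀ τ : ℝ, (W τ) * (V τ) = 1)
    (inv_val : ∀ τ : ℝ, (V τ) * (W τ) = 1)
    (hW : HasDerivAt W (A * W s) s) :
    HasDerivAt V (-((V s) * A)) s := by
  have hinv : ∀ τ : ℝ, Ring.inverse (W τ) = V τ := fun τ =>
    Ring.inverse_unit ⟨W τ, V τ, val_inv τ, inv_val τ⟩
  have h1 : HasDerivAt (fun τ => Ring.inverse (W τ))
      ((-(ContinuousLinearMap.mulLeftRight ℝ (E →L[ℝ] E) (V s) (V s))) (A * W s)) s :=
    (hasFDerivAt_ringInverse (𝕜 := ℝ)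
      ⟨W s, V s, val_inv s, inv_val s⟩).comp_hasDerivAt s hW
  have h2 : (-(ContinuousLinearMap.mulLeftRight ℝ (E →L[ℝ] E) (V s) (V s))) (A * W s)
      = -((V s) * A) := by
    rw [ContinuousLinearMap.neg_apply, ContinuousLinearMap.mulLeftRight_apply]
    have h3 : V s * (A * W s) * V s = V s * A := by
      calc V s * (A * W s) * V s = V s * A * (W s * V s) := by noncomm_ring
        _ = V s * A := by rw [val_inv s, mul_one]
    rw [h3]
  have h4 : (fun τ : ℝ => Ring.inverse (W τ)) = V := funext hinv
  rw [h4, h2] at h1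
  exact h1

/-- For `f(t,z) = f₀(Z(0,t,z)) + ∫₀ᵗ g(s,Z(s,t,z)) ds` with `f₀, g ∈ C¹` (not
necessarily C²) and `Z` the complete C¹ flow of `ż = G(s,z)`, `G ∈ C¹`, the
derivative `∂_z f` exists and satisfies the integral equation
`∂_zf(t,z) = (∂_zf₀)(Z(0,t,z)) - ∫₀ᵗ (∂_zf)(s,Z(s,t,z))·(∂_zG)(s,Z(s,t,z)) ds
+ ∫₀ᵗ (∂_zg)(s,Z(s,t,z)) ds`. -/
theorem transport_derivative_integral_equation {n : ℕ}
    (G : ℝ → EuclideanSpace ℝ (Fin n) → EuclideanSpace ℝ (Fin n))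
    (Z : ℝ → ℝ → EuclideanSpace ℝ (Fin n) → EuclideanSpace ℝ (Fin n))
    (g : ℝ → EuclideanSpace ℝ (Fin n) → ℝ)
    (f₀ : EuclideanSpace ℝ (Fin n) → ℝ)
    (f : ℝ → EuclideanSpace ℝ (Fin n) → ℝ)
    (hG : ContDiff ℝ 1 (fun p : ℝ × EuclideanSpace ℝ (Fin n) => G p.1 p.2))
    (hg : ContDiff ℝ 1 (fun p : ℝ × EuclideanSpace ℝ (Fin n) => g p.1 p.2))
    (hf₀ : ContDiff ℝ 1 f₀)
    (hZC1 : ContDiff ℝ 1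
      (fun p : ℝ × ℝ × EuclideanSpace ℝ (Fin n) => Z p.1 p.2.1 p.2.2))
    (hZinit : ∀ t z, Z t t z = z)
    (hZflow : ∀ s t z, HasDerivAt (fun s' => Z s' t z) (G s (Z s t z)) s)
    (hf : ∀ t z, f t z = f₀ (Z 0 t z) + ∫ s in (0 : ℝ)..t, g s (Z s t z)) :
    ∀ t z,
      DifferentiableAt ℝ (f t) z ∧
      fderiv ℝ (f t) z
        = fderiv ℝ f₀ (Z 0 t z)
          - (∫ s in (0 : ℝ)..t,
              (fderiv ℝ (f s) (Z s t z)).comp (fderiv ℝ (G s) (Z s t z)))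
          + ∫ s in (0 : ℝ)..t, fderiv ℝ (g s) (Z s t z) := by
  intro t z
  have hZfull2 : ContDiff ℝ 1
      (fun q : (ℝ × ℝ) × EuclideanSpace ℝ (Fin n) => Z q.1.1 q.1.2 q.2) :=
    hZC1.comp ((contDiff_fst.fst).prodMk ((contDiff_fst.snd).prodMk contDiff_snd))
  have hZdiff : ∀ (a b : ℝ) (w : EuclideanSpace ℝ (Fin n)), DifferentiableAt ℝ (Z a b) w :=
    fun a b w =>
    (aux_hasFDerivAt_partial (fun (p : ℝ × ℝ) w => Z p.1 p.2 w)
      (hZfull2.differentiable one_ne_zero ((a, b), w))).differentiableAt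
  have hWcont : Continuous
      (fun q : (ℝ × ℝ) × EuclideanSpace ℝ (Fin n) => fderiv ℝ (Z q.1.1 q.1.2) q.2) :=
    aux_cont_partialFDeriv (Φ := fun (p : ℝ × ℝ) w => Z p.1 p.2 w) hZfull2
  have hgroup : ∀ (a b c : ℝ) w, Z a b (Z b c w) = Z a c w :=
    aux_flow_group G Z hG
      (fun b w => hZC1.continuous.comp
        (continuous_id.prodMk (continuous_const (y := (b, w)))))
      hZinit hZflow
  have hGdiff : ∀ (r : ℝ) x, DifferentiableAt ℝ (G r) x := fun r x =>
    (aux_hasFDerivAt_partial G (hG.differentiable one_ne_zero (r, x))).differentiableAt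
  have hgdiff : ∀ (r : ℝ) x, DifferentiableAt ℝ (g r) x := fun r x =>
    (aux_hasFDerivAt_partial g (hg.differentiable one_ne_zero (r, x))).differentiableAt
  have hf₀diff := hf₀.differentiable one_ne_zero
  have hDGcont : Continuous fun p : ℝ × EuclideanSpace ℝ (Fin n) => fderiv ℝ (G p.1) p.2 :=
    aux_cont_partialFDeriv hG
  have hDgcont : Continuous fun p : ℝ × EuclideanSpace ℝ (Fin n) => fderiv ℝ (g p.1) p.2 :=
    aux_cont_partialFDeriv hg
  have hchain : ∀ (a b c : ℝ) w, fderiv ℝ (Z a c) w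
      = (fderiv ℝ (Z a b) (Z b c w)).comp (fderiv ℝ (Z b c) w) := by
    intro a b c w
    have h1 : Z a c = fun w => Z a b (Z b c w) := funext fun w => (hgroup a b c w).symm
    rw [h1]
    exact fderiv_comp w (hZdiff a b _) (hZdiff b c w)
  have hid : ∀ (τ : ℝ) (w : EuclideanSpace ℝ (Fin n)),
      fderiv ℝ (Z τ τ) w = ContinuousLinearMap.id ℝ (EuclideanSpace ℝ (Fin n)) := by
    intro τ w
    have h1 : Z τ τ = id := funext fun w => hZinit τ w
    rw [h1, fderiv_id]
  set W : ℝ → EuclideanSpace ℝ (Fin n) →L[ℝ] EuclideanSpace ℝ (Fin n) :=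
    fun s => fderiv ℝ (Z s t) z with hWdef
  set V : ℝ → EuclideanSpace ℝ (Fin n) →L[ℝ] EuclideanSpace ℝ (Fin n) :=
    fun s => fderiv ℝ (Z t s) (Z s t z) with hVdef
  have hWV : ∀ s : ℝ, (W s).comp (V s) = ContinuousLinearMap.id ℝ (EuclideanSpace ℝ (Fin n)) := by
    intro s
    have h1 := hchain s t s (Z s t z)
    have h2 : Z t s (Z s t z) = z := by rw [hgroup t s t z, hZinit]
    rw [hid, h2] at h1
    exact h1.symm
  have hVW : ∀ s : ℝ, (V s).comp (W s) = ContinuousLinearMap.id ℝ (EuclideanSpace ℝ (Fin n)) := by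
    intro s
    have h1 := hchain t s t z
    rw [hid] at h1
    exact h1.symm
  have val_inv : ∀ s : ℝ, (W s) * (V s) = 1 := fun s => by
    rw [ContinuousLinearMap.mul_def, ContinuousLinearMap.one_def]; exact hWV s
  have inv_val : ∀ s : ℝ, (V s) * (W s) = 1 := fun s => by
    rw [ContinuousLinearMap.mul_def, ContinuousLinearMap.one_def]; exact hVW s
  -- the integral equation for the flow and for its z-derivative
  have hZinteq : ∀ (τ : ℝ) w, Z τ t w = w + ∫ r in t..τ, G r (Z r t w) := by
    intro τ w
    have hc1 : Continuous fun r => Z r t w := hZC1.continuous.comp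
      (continuous_id.prodMk (continuous_const (y := (t, w))))
    have hcont : Continuous fun r => G r (Z r t w) :=
      hG.continuous.comp (continuous_id.prodMk hc1)
    have h1 := intervalIntegral.integral_eq_sub_of_hasDerivAt
      (fun r _ => hZflow r t w) (hcont.intervalIntegrable t τ)
    rw [h1, hZinit]
    abel
  have hWint : ∀ τ : ℝ, W τ = ContinuousLinearMap.id ℝ (EuclideanSpace ℝ (Fin n))
      + ∫ r in t..τ, (fderiv ℝ (G r) (Z r t z)).comp (W r) := by
    intro τ
    have hΦ : ContDiff ℝ 1 (fun p : ℝ × EuclideanSpace ℝ (Fin n) => G p.1 (Z p.1 t p.2)) :=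
      hG.comp (contDiff_fst.prodMk
        (hZC1.comp (contDiff_fst.prodMk (contDiff_const.prodMk contDiff_snd))))
    have hInt : HasFDerivAt (fun w => ∫ r in t..τ, G r (Z r t w))
        (∫ r in t..τ, fderiv ℝ (fun w => G r (Z r t w)) z) z :=
      aux_hasFDerivAt_intervalIntegral (Φ := fun r w => G r (Z r t w)) hΦ t τ z
    have hder : HasFDerivAt (Z τ t)
        (ContinuousLinearMap.id ℝ (EuclideanSpace ℝ (Fin n))
          + ∫ r in t..τ, fderiv ℝ (fun w => G r (Z r t w)) z) z := by
      have heqf : Z τ t = fun w => w + ∫ r in t..τ, G r (Z r t w) := funext (hZinteq τ)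
      rw [heqf]
      exact (hasFDerivAt_id z).add hInt
    show fderiv ℝ (Z τ t) z = _
    rw [hder.fderiv]
    congr 1
    refine intervalIntegral.integral_congr fun r _ => ?_
    exact fderiv_comp z (hGdiff r _) (hZdiff r t z)
  have hccont : Continuous fun r => Z r t z := hZC1.continuous.comp
    (continuous_id.prodMk (continuous_const (y := (t, z))))
  have hWc : Continuous W :=
    hWcont.comp ((continuous_id.prodMk continuous_const).prodMk continuous_const)
  have hDGc : Continuous fun s => fderiv ℝ (G s) (Z s t z) :=
    hDGcont.comp (continuous_id.prodMk hccont)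
  have hDgc : Continuous fun s => fderiv ℝ (g s) (Z s t z) :=
    hDgcont.comp (continuous_id.prodMk hccont)
  have hqc : Continuous fun r => (fderiv ℝ (G r) (Z r t z)).comp (W r) := hDGc.clm_comp hWc
  have hWderiv : ∀ τ : ℝ, HasDerivAt W ((fderiv ℝ (G τ) (Z τ t z)).comp (W τ)) τ := by
    intro τ
    have h1 := (hasDerivAt_const τ (ContinuousLinearMap.id ℝ (EuclideanSpace ℝ (Fin n)))).add
      (intervalIntegral.integral_hasDerivAt_right (hqc.intervalIntegrable t τ)
        (hqc.stronglyMeasurableAtFilter _ _) hqc.continuousAt)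
    rw [zero_add] at h1
    exact h1.congr_of_eventuallyEq (Filter.Eventually.of_forall hWint)
  have hVderiv : ∀ s : ℝ,
      HasDerivAt V (-(V s).comp (fderiv ℝ (G s) (Z s t z))) s := by
    intro s
    have hW' : HasDerivAt W (fderiv ℝ (G s) (Z s t z) * W s) s := by
      rw [ContinuousLinearMap.mul_def]; exact hWderiv s
    have h := aux_inverse_hasDerivAt W V (fderiv ℝ (G s) (Z s t z)) s val_inv inv_val hW'
    rw [ContinuousLinearMap.mul_def] at h
    exact h
  -- derivative of f in z
  have hfsderiv : ∀ (s : ℝ) (w : EuclideanSpace ℝ (Fin n)),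
      HasFDerivAt (f s) ((fderiv ℝ f₀ (Z 0 s w)).comp (fderiv ℝ (Z 0 s) w)
        + ∫ r in (0:ℝ)..s, (fderiv ℝ (g r) (Z r s w)).comp (fderiv ℝ (Z r s) w)) w := by
    intro s w
    have hfs : f s = fun w => f₀ (Z 0 s w) + ∫ r in (0:ℝ)..s, g r (Z r s w) :=
      funext fun w => hf s w
    rw [hfs]
    apply HasFDerivAt.add
    · exact (hf₀diff (Z 0 s w)).hasFDerivAt.comp w (hZdiff 0 s w).hasFDerivAt
    · have hΦ : ContDiff ℝ 1 (fun p : ℝ × EuclideanSpace ℝ (Fin n) => g p.1 (Z p.1 s p.2)) :=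
        hg.comp (contDiff_fst.prodMk
          (hZC1.comp (contDiff_fst.prodMk (contDiff_const.prodMk contDiff_snd))))
      have hInt : HasFDerivAt (fun w => ∫ r in (0:ℝ)..s, g r (Z r s w))
          (∫ r in (0:ℝ)..s, fderiv ℝ (fun w => g r (Z r s w)) w) w :=
        aux_hasFDerivAt_intervalIntegral (Φ := fun r w => g r (Z r s w)) hΦ 0 s w
      have hcong : (∫ r in (0:ℝ)..s, fderiv ℝ (fun w => g r (Z r s w)) w)
          = ∫ r in (0:ℝ)..s, (fderiv ℝ (g r) (Z r s w)).comp (fderiv ℝ (Z r s) w) :=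
        intervalIntegral.integral_congr fun r _ =>
          fderiv_comp w (hgdiff r _) (hZdiff r s w)
      rw [← hcong]
      exact hInt
  set M : ℝ → EuclideanSpace ℝ (Fin n) →L[ℝ] ℝ := fun s =>
    (fderiv ℝ f₀ (Z 0 t z)).comp (W 0)
      + ∫ r in (0:ℝ)..s, (fderiv ℝ (g r) (Z r t z)).comp (W r) with hMdef
  have hMint : Continuous fun r => (fderiv ℝ (g r) (Z r t z)).comp (W r) := hDgc.clm_comp hWc
  have hMderiv : ∀ s : ℝ, HasDerivAt M ((fderiv ℝ (g s) (Z s t z)).comp (W s)) s := by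
    intro s
    have h1 := (hasDerivAt_const s ((fderiv ℝ f₀ (Z 0 t z)).comp (W 0))).add
      (intervalIntegral.integral_hasDerivAt_right (hMint.intervalIntegrable 0 s)
        (hMint.stronglyMeasurableAtFilter _ _) hMint.continuousAt)
    rw [zero_add] at h1
    exact h1
  have hQeq : ∀ s : ℝ, fderiv ℝ (f s) (Z s t z) = (M s).comp (V s) := by
    intro s
    rw [(hfsderiv s (Z s t z)).fderiv]
    have e1 : Z 0 s (Z s t z) = Z 0 t z := hgroup 0 s t z
    have e3 : ∀ r : ℝ, fderiv ℝ (Z r s) (Z s t z) = (W r).comp (V s) := by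
      intro r
      have h1 := hchain r s t z
      have h2 := congrArg (fun A : EuclideanSpace ℝ (Fin n) →L[ℝ] EuclideanSpace ℝ (Fin n)
        => A.comp (V s)) h1
      simp only [ContinuousLinearMap.comp_assoc] at h2
      rw [hWV s, ContinuousLinearMap.comp_id] at h2
      exact h2.symm
    have e2 : (∫ r in (0:ℝ)..s, (fderiv ℝ (g r) (Z r s (Z s t z))).comp
          (fderiv ℝ (Z r s) (Z s t z)))
        = ∫ r in (0:ℝ)..s, ((fderiv ℝ (g r) (Z r t z)).comp (W r)).comp (V s) :=
      intervalIntegral.integral_congr fun r _ => by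
        rw [hgroup r s t z, e3 r, ← ContinuousLinearMap.comp_assoc]
    rw [e1, e3 0, e2]
    have e4 : (∫ r in (0:ℝ)..s, ((fderiv ℝ (g r) (Z r t z)).comp (W r)).comp (V s))
        = (∫ r in (0:ℝ)..s, (fderiv ℝ (g r) (Z r t z)).comp (W r)).comp (V s) := by
      have h5 := ((ContinuousLinearMap.compL ℝ (EuclideanSpace ℝ (Fin n))
        (EuclideanSpace ℝ (Fin n)) ℝ).flip (V s)).intervalIntegral_comp_comm
        (μ := MeasureTheory.volume) (hMint.intervalIntegrable 0 s)
      simpa [ContinuousLinearMap.flip_apply, ContinuousLinearMap.compL_apply] using h5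
    rw [e4, ← ContinuousLinearMap.comp_assoc, ← ContinuousLinearMap.add_comp]
  have hVc : Continuous V := continuous_iff_continuousAt.mpr fun s => (hVderiv s).continuousAt
  have hMc : Continuous M := continuous_iff_continuousAt.mpr fun s => (hMderiv s).continuousAt
  have hQderiv : ∀ s : ℝ, HasDerivAt (fun s' => (M s').comp (V s'))
      (fderiv ℝ (g s) (Z s t z)
        - ((M s).comp (V s)).comp (fderiv ℝ (G s) (Z s t z))) s := by
    intro s
    have h1 := (hMderiv s).clm_comp (hVderiv s)
    have h2 : ((fderiv ℝ (g s) (Z s t z)).comp (W s)).comp (V s)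
        + (M s).comp (-(V s).comp (fderiv ℝ (G s) (Z s t z)))
        = fderiv ℝ (g s) (Z s t z)
          - ((M s).comp (V s)).comp (fderiv ℝ (G s) (Z s t z)) := by
      rw [ContinuousLinearMap.comp_assoc, hWV s, ContinuousLinearMap.comp_id,
        ContinuousLinearMap.comp_neg, ← ContinuousLinearMap.comp_assoc, sub_eq_add_neg]
    rw [h2] at h1
    exact h1
  have hintc : Continuous fun s => fderiv ℝ (g s) (Z s t z)
      - ((M s).comp (V s)).comp (fderiv ℝ (G s) (Z s t z)) :=
    hDgc.sub ((hMc.clm_comp hVc).clm_comp hDGc)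
  have key := intervalIntegral.integral_eq_sub_of_hasDerivAt
    (f := fun s => (M s).comp (V s)) (f' := fun s => fderiv ℝ (g s) (Z s t z)
      - ((M s).comp (V s)).comp (fderiv ℝ (G s) (Z s t z)))
    (a := 0) (b := t) (fun s _ => hQderiv s) (hintc.intervalIntegrable 0 t)
  have hsub : (∫ s in (0:ℝ)..t, (fderiv ℝ (g s) (Z s t z)
        - ((M s).comp (V s)).comp (fderiv ℝ (G s) (Z s t z))))
      = (∫ s in (0:ℝ)..t, fderiv ℝ (g s) (Z s t z))
        - ∫ s in (0:ℝ)..t, ((M s).comp (V s)).comp (fderiv ℝ (G s) (Z s t z)) :=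
    intervalIntegral.integral_sub (hDgc.intervalIntegrable 0 t)
      (((hMc.clm_comp hVc).clm_comp hDGc).intervalIntegrable 0 t)
  rw [hsub] at key
  have key2 : (∫ s in (0:ℝ)..t, fderiv ℝ (g s) (Z s t z))
        - (∫ s in (0:ℝ)..t, ((M s).comp (V s)).comp (fderiv ℝ (G s) (Z s t z)))
      = (M t).comp (V t) - (M 0).comp (V 0) := key
  clear key
  have hVt : V t = ContinuousLinearMap.id ℝ (EuclideanSpace ℝ (Fin n)) := by
    show fderiv ℝ (Z t t) (Z t t z) = _
    rw [hid]
  have hQt : fderiv ℝ (f t) z = M t := by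
    have h1 := hQeq t
    rw [hZinit] at h1
    rw [h1, hVt, ContinuousLinearMap.comp_id]
  have hQ0 : (M 0).comp (V 0) = fderiv ℝ f₀ (Z 0 t z) := by
    have hM0 : M 0 = (fderiv ℝ f₀ (Z 0 t z)).comp (W 0) := by
      show (fderiv ℝ f₀ (Z 0 t z)).comp (W 0) + ∫ r in (0:ℝ)..(0:ℝ),
        (fderiv ℝ (g r) (Z r t z)).comp (W r) = _
      rw [intervalIntegral.integral_same, add_zero]
    rw [hM0, ContinuousLinearMap.comp_assoc, hWV 0, ContinuousLinearMap.comp_id]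
  refine ⟨(hfsderiv t z).differentiableAt, ?_⟩
  have hIcong : (∫ s in (0:ℝ)..t,
        (fderiv ℝ (f s) (Z s t z)).comp (fderiv ℝ (G s) (Z s t z)))
      = ∫ s in (0:ℝ)..t, ((M s).comp (V s)).comp (fderiv ℝ (G s) (Z s t z)) :=
    intervalIntegral.integral_congr fun s _ => by rw [hQeq s]
  rw [hQt, hIcong]
  rw [hVt, ContinuousLinearMap.comp_id, hQ0] at key2
  have hfin : M t = fderiv ℝ f₀ (Z 0 t z)
      + ((∫ s in (0:ℝ)..t, fderiv ℝ (g s) (Z s t z))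
        - ∫ s in (0:ℝ)..t, ((M s).comp (V s)).comp (fderiv ℝ (G s) (Z s t z))) := by
    rw [key2]; abel
  rw [hfin]; abel
end
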